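/- arXiv:2107.08977 — 2 statements merged into one kernel-verified Lean document; each statement's English description precedes it below -/
import Mathlib

section
/- Let B = σ(A)⟨x_1,…,x_n⟩ be a skew PBW extension of A with σ_i = id_A for all i; q_{ij} and a_{ij}^{(t)} lying in the center Z(A) with every q_{ij} invertible in A; δ_1 = 0; δ_t(q_{ij}) = δ_t(a_{ij}^{(m)}) = 0 for all m = 0,…,n and i,j,t = 1,…,n; and p_{1j} = 0 for all j (so x_j x_1 = q_{1j} x_1 x_j for all j > 1). Then S := {x_1^m : m ∈ ℕ} is a multiplicative set of B consisting of regular elements (s P = 0 implies P = 0 and P s = 0 implies P = 0 for s ∈ S, P ∈ B), and S satisfies both the left and the right Ore conditions: for every P ∈ B and every s = x_1^l ∈ S there exist Q, Q' ∈ B with P s = s Q and s P = Q' s. -/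
structure SkewPBW (A : Type*) (B : Type*) [Ring A] [Ring B] (n : ℕ) where
  ι : A →+* B
  hι : Function.Injective ι
  x : Fin n → B
  σ : Fin n → A →+* A
  hσ : ∀ i, Function.Injective (σ i)
  δ : Fin n → A → A
  δ_add : ∀ i a b, δ i (a + b) = δ i a + δ i b
  δ_mul : ∀ i a b, δ i (a * b) = σ i a * δ i b + δ i a * b
  x_comm : ∀ (i : Fin n) (a : A), x i * ι a = ι (σ i a) * x i + ι (δ i a)
  q : Fin n → Fin n → A
  q_leftinv : ∀ i j : Fin n, i < j → ∃ u : A, u * q i j = 1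
  a0 : Fin n → Fin n → A
  ac : Fin n → Fin n → Fin n → A
  rel : ∀ i j : Fin n, i < j →
    x j * x i = ι (q i j) * (x i * x j) + ι (a0 i j) + ∑ t : Fin n, ι (ac i j t) * x t
  free : ∀ f : B, ∃! c : (Fin n → ℕ) →₀ A,
    f = c.sum fun v a => ι a * ((List.finRange n).map fun i => x i ^ v i).prod

namespace Stmt13

variable {A B : Type*} [Ring A] [Ring B] {m : ℕ}

/-- The standard monomial. -/
def mon (S : SkewPBW A B (m + 1)) (v : Fin (m + 1) → ℕ) : B :=
  ((List.finRange (m + 1)).map fun i => S.x i ^ v i).prod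

def Qq (S : SkewPBW A B (m + 1)) (i : Fin (m + 1)) : A :=
  if i = 0 then 1 else S.q 0 i

def cc (S : SkewPBW A B (m + 1)) (v : Fin (m + 1) → ℕ) : A :=
  ((List.finRange (m + 1)).map fun i => Qq S i ^ v i).prod

structure Hyp (S : SkewPBW A B (m + 1)) : Prop where
  hs : ∀ (i : Fin (m + 1)) (a : A), S.σ i a = a
  hqc : ∀ (i j : Fin (m + 1)) (b : A), S.q i j * b = b * S.q i j
  hqu : ∀ i j : Fin (m + 1), i < j → IsUnit (S.q i j)
  hd1 : ∀ a : A, S.δ 0 a = 0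
  hdq : ∀ t i j : Fin (m + 1), S.δ t (S.q i j) = 0
  hp0 : ∀ j : Fin (m + 1), S.a0 0 j = 0
  hpc : ∀ j t : Fin (m + 1), S.ac 0 j t = 0

variable {S : SkewPBW A B (m + 1)}

lemma delta_one (t : Fin (m + 1)) : S.δ t 1 = 0 := by
  have h := S.δ_mul t 1 1
  simp only [one_mul, mul_one, map_one] at h
  have h2 : S.δ t 1 + S.δ t 1 = S.δ t 1 + 0 := by rw [add_zero]; exact h.symm
  exact add_left_cancel h2

/-- "Nice" elements: central and annihilated by all δ's. -/
def Nice (S : SkewPBW A B (m + 1)) (a : A) : Prop :=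
  (∀ b, a * b = b * a) ∧ ∀ t, S.δ t a = 0

lemma nice_one : Nice S 1 :=
  ⟨fun b => by rw [one_mul, mul_one], fun t => delta_one t⟩

lemma nice_mul {a b : A} (ha : Nice S a) (hb : Nice S b) : Nice S (a * b) := by
  refine ⟨fun c => ?_, fun t => ?_⟩
  · rw [mul_assoc, hb.1, ← mul_assoc, ha.1, mul_assoc]
  · rw [S.δ_mul, ha.2, hb.2, mul_zero, zero_mul, add_zero]

lemma nice_pow {a : A} (ha : Nice S a) (k : ℕ) : Nice S (a ^ k) := by
  induction k with
  | zero => simpa using (nice_one : Nice S 1)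
  | succ k ih => rw [pow_succ]; exact nice_mul ih ha

lemma nice_Qq (h : Hyp S) (i : Fin (m + 1)) : Nice S (Qq S i) := by
  unfold Qq
  by_cases hi : i = 0
  · simpa [hi] using (nice_one : Nice S 1)
  · rw [if_neg hi]
    exact ⟨fun b => h.hqc 0 i b, fun t => h.hdq t 0 i⟩

lemma nice_prodQ (h : Hyp S) (v : Fin (m + 1) → ℕ) (L : List (Fin (m + 1))) :
    Nice S ((L.map fun i => Qq S i ^ v i).prod) := by
  induction L with
  | nil => simpa using (nice_one : Nice S 1)
  | cons i L ih =>
      simp only [List.map_cons, List.prod_cons]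
      exact nice_mul (nice_pow (nice_Qq h i) (v i)) ih

lemma nice_cc (h : Hyp S) (v : Fin (m + 1) → ℕ) : Nice S (cc S v) :=
  nice_prodQ h v _

lemma commX (h : Hyp S) {a : A} (ha : Nice S a) (s : Fin (m + 1)) :
    Commute (S.x s) (S.ι a) := by
  show S.x s * S.ι a = S.ι a * S.x s
  rw [S.x_comm, h.hs, ha.2, map_zero, add_zero]

lemma comm_mon (h : Hyp S) {a : A} (ha : Nice S a) (v : Fin (m + 1) → ℕ) :
    Commute (S.ι a) (mon S v) := by
  apply Commute.list_prod_right
  intro y hy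
  simp only [List.mem_map, List.mem_finRange, true_and] at hy
  obtain ⟨i, rfl⟩ := hy
  exact ((commX h ha i).symm).pow_right _

lemma z_comm (h : Hyp S) (a : A) : Commute (S.x 0) (S.ι a) := by
  show S.x 0 * S.ι a = S.ι a * S.x 0
  rw [S.x_comm, h.hs, h.hd1, map_zero, add_zero]

lemma xj_z (h : Hyp S) (j : Fin (m + 1)) (hj : j ≠ 0) :
    S.x j * S.x 0 = S.ι (S.q 0 j) * (S.x 0 * S.x j) := by
  have hlt : (0 : Fin (m + 1)) < j := Fin.pos_of_ne_zero hj
  rw [S.rel 0 j hlt]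
  simp [h.hp0, h.hpc]

lemma x_z (h : Hyp S) (i : Fin (m + 1)) :
    S.x i * S.x 0 = S.ι (Qq S i) * (S.x 0 * S.x i) := by
  by_cases hi : i = 0
  · subst hi; simp [Qq]
  · rw [Qq, if_neg hi]; exact xj_z h i hi

lemma x_pow_z (h : Hyp S) (i : Fin (m + 1)) (k : ℕ) :
    S.x i ^ k * S.x 0 = S.ι (Qq S i ^ k) * (S.x 0 * S.x i ^ k) := by
  induction k with
  | zero => simp
  | succ k ih =>
      have hcq : ∀ w : ℕ, Commute (S.ι (Qq S i)) (S.x i ^ w) :=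
        fun w => ((commX h (nice_Qq h i) i).symm).pow_right w
      calc S.x i ^ (k + 1) * S.x 0 = S.x i ^ k * (S.x i * S.x 0) := by
            rw [pow_succ, mul_assoc]
        _ = S.x i ^ k * (S.ι (Qq S i) * (S.x 0 * S.x i)) := by rw [x_z h i]
        _ = S.ι (Qq S i) * (S.x i ^ k * S.x 0 * S.x i) := by
            rw [← mul_assoc, ← (hcq k).eq, mul_assoc, mul_assoc]
        _ = S.ι (Qq S i) * (S.ι (Qq S i ^ k) * (S.x 0 * S.x i ^ k) * S.x i) := by rw [ih]
        _ = S.ι (Qq S i ^ (k + 1)) * (S.x 0 * S.x i ^ (k + 1)) := by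
            rw [pow_succ' (Qq S i) k, map_mul, pow_succ]
            simp only [mul_assoc]

lemma swap_list (h : Hyp S) (v : Fin (m + 1) → ℕ) (L : List (Fin (m + 1))) :
    ((L.map fun i => S.x i ^ v i).prod) * S.x 0
      = S.ι ((L.map fun i => Qq S i ^ v i).prod)
          * (S.x 0 * (L.map fun i => S.x i ^ v i).prod) := by
  induction L with
  | nil => simp
  | cons i L ih =>
      simp only [List.map_cons, List.prod_cons]
      set P := (L.map fun i => S.x i ^ v i).prod with hP
      set cL := (L.map fun i => Qq S i ^ v i).prod with hcL
      have hniceL : Nice S cL := nice_prodQ h v L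
      have hc1 : Commute (S.ι cL) (S.x i ^ v i) :=
        ((commX h hniceL i).symm).pow_right _
      calc S.x i ^ v i * P * S.x 0 = S.x i ^ v i * (P * S.x 0) := by rw [mul_assoc]
        _ = S.x i ^ v i * (S.ι cL * (S.x 0 * P)) := by rw [ih]
        _ = S.ι cL * (S.x i ^ v i * S.x 0 * P) := by
            rw [← mul_assoc, ← hc1.eq, mul_assoc, mul_assoc]
        _ = S.ι cL * (S.ι (Qq S i ^ v i) * (S.x 0 * S.x i ^ v i) * P) := by
            rw [x_pow_z h i]
        _ = S.ι (Qq S i ^ v i * cL) * (S.x 0 * (S.x i ^ v i * P)) := by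
            rw [← hniceL.1 (Qq S i ^ v i), map_mul]
            simp only [mul_assoc]

lemma swap (h : Hyp S) (v : Fin (m + 1) → ℕ) :
    mon S v * S.x 0 = S.ι (cc S v) * (S.x 0 * mon S v) :=
  swap_list h v _

lemma cc_unit (h : Hyp S) (v : Fin (m + 1) → ℕ) : IsUnit (cc S v) := by
  unfold cc
  induction (List.finRange (m + 1)) with
  | nil => simpa using isUnit_one
  | cons i L ih =>
      simp only [List.map_cons, List.prod_cons]
      refine IsUnit.mul (IsUnit.pow _ ?_) ih
      unfold Qq
      by_cases hi : i = 0
      · simp [hi]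
      · rw [if_neg hi]; exact h.hqu 0 i (Fin.pos_of_ne_zero hi)

lemma nice_inv (h : Hyp S) {a : A} (hu : IsUnit a) (ha : Nice S a) :
    Nice S (↑hu.unit⁻¹ : A) := by
  have h1 : (↑hu.unit⁻¹ : A) * a = 1 := hu.val_inv_mul
  have h2 : a * (↑hu.unit⁻¹ : A) = 1 := hu.mul_val_inv
  constructor
  · intro b
    calc (↑hu.unit⁻¹ : A) * b = ↑hu.unit⁻¹ * b * (a * ↑hu.unit⁻¹) := by rw [h2, mul_one]
      _ = ↑hu.unit⁻¹ * (b * a) * ↑hu.unit⁻¹ := by simp only [mul_assoc]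
      _ = ↑hu.unit⁻¹ * (a * b) * ↑hu.unit⁻¹ := by rw [← ha.1 b]
      _ = (↑hu.unit⁻¹ * a) * b * ↑hu.unit⁻¹ := by simp only [mul_assoc]
      _ = b * ↑hu.unit⁻¹ := by rw [h1, one_mul]
  · intro t
    have e1 : S.δ t ((↑hu.unit⁻¹ : A) * a) = S.δ t (↑hu.unit⁻¹ : A) * a := by
      rw [S.δ_mul, ha.2, mul_zero, zero_add]
    rw [h1, delta_one] at e1
    calc S.δ t (↑hu.unit⁻¹ : A) = S.δ t (↑hu.unit⁻¹ : A) * (a * ↑hu.unit⁻¹) := by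
          rw [h2, mul_one]
      _ = (S.δ t (↑hu.unit⁻¹ : A) * a) * ↑hu.unit⁻¹ := by rw [mul_assoc]
      _ = 0 := by rw [← e1, zero_mul]

/-- Shift of the exponent vector by `e₁`. -/
def shift (v : Fin (m + 1) → ℕ) : Fin (m + 1) → ℕ := Function.update v 0 (v 0 + 1)

lemma shift_inj : Function.Injective (shift (m := m)) := by
  intro v w hvw
  funext i
  by_cases hi : i = 0
  · subst hi
    have h0 := congrFun hvw 0
    simpa [shift, Function.update_self] using h0
  · have h0 := congrFun hvw i
    simpa [shift, Function.update_of_ne hi] using h0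

lemma z_mon (S : SkewPBW A B (m + 1)) (v : Fin (m + 1) → ℕ) :
    S.x 0 * mon S v = mon S (shift v) := by
  unfold mon
  rw [List.finRange_succ, List.map_cons, List.map_cons, List.prod_cons,
    List.prod_cons, List.map_map, List.map_map]
  have hT : (List.map ((fun i => S.x i ^ shift v i) ∘ Fin.succ) (List.finRange m))
      = List.map ((fun i => S.x i ^ v i) ∘ Fin.succ) (List.finRange m) := by
    apply List.map_congr_left
    intro i _
    simp only [Function.comp]
    rw [show shift v i.succ = v i.succ from Function.update_of_ne (Fin.succ_ne_zero i) _ _]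
  rw [hT, show shift v 0 = v 0 + 1 from Function.update_self _ _ _, ← mul_assoc,
    ← pow_succ']

lemma leftreg1 (h : Hyp S) (P : B) (hP : S.x 0 * P = 0) : P = 0 := by
  obtain ⟨cf, hcf, -⟩ := S.free P
  have hcf' : P = cf.sum fun v a => S.ι a * mon S v := hcf
  obtain ⟨c0, hc0, hu0⟩ := S.free (0 : B)
  have hz0 : (0 : (Fin (m + 1) → ℕ) →₀ A) = c0 :=
    hu0 0 Finsupp.sum_zero_index.symm
  have hrep : S.x 0 * P
      = (Finsupp.embDomain ⟨shift, shift_inj⟩ cf).sum fun v a => S.ι a * mon S v := by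
    rw [Finsupp.sum_embDomain, hcf', Finsupp.mul_sum]
    apply Finsupp.sum_congr
    intro v _
    show S.x 0 * (S.ι (cf v) * mon S v) = S.ι (cf v) * mon S (shift v)
    rw [← mul_assoc, (z_comm h (cf v)).eq, mul_assoc, z_mon]
  have he : Finsupp.embDomain ⟨shift, shift_inj⟩ cf = c0 :=
    hu0 _ (by
      show (0 : B) = (Finsupp.embDomain ⟨shift, shift_inj⟩ cf).sum fun v a => S.ι a * mon S v
      rw [← hrep, hP])
  have hcf0 : cf = 0 := Finsupp.embDomain_eq_zero.mp (he.trans hz0.symm)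
  rw [hcf', hcf0, Finsupp.sum_zero_index]

lemma key_right (h : Hyp S) (cf : (Fin (m + 1) → ℕ) →₀ A) :
    (cf.sum fun v a => S.ι a * mon S v) * S.x 0
      = S.x 0 * ((Finsupp.onFinset cf.support (fun v => cf v * cc S v)
          (fun v hv => Finsupp.mem_support_iff.mpr
            (fun h0 => hv (by simp [h0])))).sum
          fun v a => S.ι a * mon S v) := by
  have e : ∀ v : Fin (m + 1) → ℕ, ∀ a : A,
      (S.ι a * mon S v) * S.x 0 = S.x 0 * (S.ι (a * cc S v) * mon S v) := by
    intro v a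
    rw [mul_assoc, swap h v, ← mul_assoc, ← map_mul, ← mul_assoc,
      ← (z_comm h (a * cc S v)).eq, mul_assoc]
  rw [Finsupp.sum_mul]
  calc (cf.sum fun v a => S.ι a * mon S v * S.x 0)
      = cf.sum fun v a => S.x 0 * (S.ι (a * cc S v) * mon S v) := by
        apply Finsupp.sum_congr; intro v _; exact e v (cf v)
    _ = S.x 0 * cf.sum fun v a => S.ι (a * cc S v) * mon S v := by
        rw [Finsupp.mul_sum]
    _ = _ := by
        congr 1
        rw [Finsupp.sum_of_support_subset _ Finsupp.support_onFinset_subset _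
          (fun i _ => by rw [map_zero, zero_mul]), Finsupp.sum]
        apply Finset.sum_congr rfl
        intro v _
        rw [Finsupp.onFinset_apply]

lemma rightreg1 (h : Hyp S) (P : B) (hP : P * S.x 0 = 0) : P = 0 := by
  obtain ⟨cf, hcf, -⟩ := S.free P
  have hcf' : P = cf.sum fun v a => S.ι a * mon S v := hcf
  set cf2 := Finsupp.onFinset cf.support (fun v => cf v * cc S v)
    (fun v hv => Finsupp.mem_support_iff.mpr
      (fun h0 => hv (by simp [h0]))) with hcf2def
  have hz : P * S.x 0 = S.x 0 * (cf2.sum fun v a => S.ι a * mon S v) := by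
    rw [hcf']; exact key_right h cf
  have hQ : (cf2.sum fun v a => S.ι a * mon S v) = 0 :=
    leftreg1 h _ (by rw [← hz, hP])
  obtain ⟨c0, hc0, hu0⟩ := S.free (0 : B)
  have hz0 : (0 : (Fin (m + 1) → ℕ) →₀ A) = c0 :=
    hu0 0 Finsupp.sum_zero_index.symm
  have h1 : cf2 = c0 := hu0 _ (by
    show (0 : B) = cf2.sum fun v a => S.ι a * mon S v
    rw [hQ])
  have hcf20 : cf2 = 0 := h1.trans hz0.symm
  have hv : ∀ v, cf v = 0 := by
    intro v
    have h3 : cf v * cc S v = 0 := by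
      have := DFunLike.congr_fun hcf20 v
      simpa [hcf2def, Finsupp.onFinset_apply] using this
    have hu := cc_unit h v
    calc cf v = cf v * (cc S v * ↑hu.unit⁻¹) := by rw [hu.mul_val_inv, mul_one]
      _ = (cf v * cc S v) * ↑hu.unit⁻¹ := by rw [mul_assoc]
      _ = 0 := by rw [h3, zero_mul]
  have : cf = 0 := Finsupp.ext hv
  rw [hcf', this, Finsupp.sum_zero_index]

lemma rightOre1 (h : Hyp S) (P : B) : ∃ Q : B, P * S.x 0 = S.x 0 * Q := by
  obtain ⟨cf, hcf, -⟩ := S.free P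
  have hcf' : P = cf.sum fun v a => S.ι a * mon S v := hcf
  exact ⟨_, by rw [hcf']; exact key_right h cf⟩

lemma leftOre1 (h : Hyp S) (P : B) : ∃ Q' : B, S.x 0 * P = Q' * S.x 0 := by
  obtain ⟨cf, hcf, -⟩ := S.free P
  have hcf' : P = cf.sum fun v a => S.ι a * mon S v := hcf
  refine ⟨cf.sum fun v a => S.ι (a * ↑(cc_unit h v).unit⁻¹) * mon S v, ?_⟩
  rw [hcf', Finsupp.mul_sum, Finsupp.sum_mul]
  apply Finsupp.sum_congr
  intro v _
  set a := cf v
  set u : A := (↑(cc_unit h v).unit⁻¹ : A) with hu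
  have hzm : S.x 0 * mon S v = (S.ι u * mon S v) * S.x 0 := by
    have h1 : S.ι u * (mon S v * S.x 0) = S.x 0 * mon S v := by
      rw [swap h v, ← mul_assoc, ← map_mul, hu, (cc_unit h v).val_inv_mul, map_one,
        one_mul]
    rw [← h1, mul_assoc]
  show S.x 0 * (S.ι a * mon S v) = (S.ι (a * u) * mon S v) * S.x 0
  rw [← mul_assoc, (z_comm h a).eq, mul_assoc, hzm, map_mul]
  simp only [← mul_assoc]

end Stmt13

/-- `S = {x_1^m}` consists of regular elements and satisfies the
left and right Ore conditions. -/
theorem stmt_13 {A B : Type*} [Ring A] [Ring B] {n : ℕ} (hn : 0 < n)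
    (S : SkewPBW A B n)
    (hσ : ∀ (i : Fin n) (a : A), S.σ i a = a)
    (hqc : ∀ (i j : Fin n) (b : A), S.q i j * b = b * S.q i j)
    (hacc : ∀ (i j t : Fin n) (b : A), S.ac i j t * b = b * S.ac i j t)
    (ha0c : ∀ (i j : Fin n) (b : A), S.a0 i j * b = b * S.a0 i j)
    (hqu : ∀ i j : Fin n, i < j → IsUnit (S.q i j))
    (hδ1 : ∀ a : A, S.δ ⟨0, hn⟩ a = 0)
    (hδq : ∀ t i j : Fin n, S.δ t (S.q i j) = 0)
    (hδa0 : ∀ t i j : Fin n, S.δ t (S.a0 i j) = 0)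
    (hδac : ∀ t i j m : Fin n, S.δ t (S.ac i j m) = 0)
    (hp1a0 : ∀ j : Fin n, S.a0 ⟨0, hn⟩ j = 0)
    (hp1ac : ∀ j t : Fin n, S.ac ⟨0, hn⟩ j t = 0) :
    (∀ s ∈ Submonoid.powers (S.x ⟨0, hn⟩), ∀ P : B, s * P = 0 → P = 0) ∧
    (∀ s ∈ Submonoid.powers (S.x ⟨0, hn⟩), ∀ P : B, P * s = 0 → P = 0) ∧
    (∀ (P : B) (l : ℕ), ∃ Q : B, P * S.x ⟨0, hn⟩ ^ l = S.x ⟨0, hn⟩ ^ l * Q) ∧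
    (∀ (P : B) (l : ℕ), ∃ Q' : B, S.x ⟨0, hn⟩ ^ l * P = Q' * S.x ⟨0, hn⟩ ^ l) := by
  obtain ⟨m, rfl⟩ := Nat.exists_eq_succ_of_ne_zero hn.ne'
  have h0 : (⟨0, hn⟩ : Fin (m + 1)) = 0 := rfl
  rw [h0] at hδ1 hp1a0 hp1ac ⊢
  have hyp : Stmt13.Hyp S := ⟨hσ, hqc, hqu, hδ1, hδq, hp1a0, hp1ac⟩
  have hL : ∀ (k : ℕ) (P : B), S.x 0 ^ k * P = 0 → P = 0 := by
    intro k
    induction k with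
    | zero => intro P hP; simpa using hP
    | succ k ih =>
        intro P hP
        have h1 : S.x 0 ^ k * (S.x 0 * P) = 0 := by
          rw [← mul_assoc, ← pow_succ]; exact hP
        exact Stmt13.leftreg1 hyp P (ih _ h1)
  have hR : ∀ (k : ℕ) (P : B), P * S.x 0 ^ k = 0 → P = 0 := by
    intro k
    induction k with
    | zero => intro P hP; simpa using hP
    | succ k ih =>
        intro P hP
        have h1 : (P * S.x 0) * S.x 0 ^ k = 0 := by
          rw [mul_assoc, ← pow_succ']; exact hP
        exact Stmt13.rightreg1 hyp P (ih _ h1)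
  refine ⟨?_, ?_, ?_, ?_⟩
  · rintro s ⟨k, rfl⟩ P hP; exact hL k P hP
  · rintro s ⟨k, rfl⟩ P hP; exact hR k P hP
  · intro P l
    induction l with
    | zero => exact ⟨P, by simp⟩
    | succ l ih =>
        obtain ⟨Q, hQ⟩ := ih
        obtain ⟨Q2, hQ2⟩ := Stmt13.rightOre1 hyp Q
        refine ⟨Q2, ?_⟩
        calc P * S.x 0 ^ (l + 1) = (P * S.x 0 ^ l) * S.x 0 := by rw [pow_succ, mul_assoc]
          _ = (S.x 0 ^ l * Q) * S.x 0 := by rw [hQ]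
          _ = S.x 0 ^ l * (S.x 0 * Q2) := by rw [mul_assoc, hQ2]
          _ = S.x 0 ^ (l + 1) * Q2 := by rw [← mul_assoc, ← pow_succ]
  · intro P l
    induction l with
    | zero => exact ⟨P, by simp⟩
    | succ l ih =>
        obtain ⟨Q', hQ'⟩ := ih
        obtain ⟨Q2, hQ2⟩ := Stmt13.leftOre1 hyp Q'
        refine ⟨Q2, ?_⟩
        calc S.x 0 ^ (l + 1) * P = S.x 0 * (S.x 0 ^ l * P) := by rw [pow_succ', mul_assoc]
          _ = S.x 0 * (Q' * S.x 0 ^ l) := by rw [hQ']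
          _ = (Q2 * S.x 0) * S.x 0 ^ l := by rw [← mul_assoc, hQ2]
          _ = Q2 * S.x 0 ^ (l + 1) := by rw [mul_assoc, ← pow_succ']
end

section
/- Let B = σ(A)⟨x_1,…,x_n⟩ be a skew PBW extension of A with σ_i = id_A for all i; q_{ij} and a_{ij}^{(t)} lying in the center Z(A) with every q_{ij} invertible in A; δ_1 = 0; δ_t(q_{ij}) = δ_t(a_{ij}^{(m)}) = 0 for all m = 0,…,n and i,j,t = 1,…,n; and p_{1j} = 0 for all j. Then the Ore localization D := B S^{-1} of B at S := {x_1^m : m ∈ ℕ} exists, B embeds in D, and D is an extension of A of type O_{q,δ}^{1,n} with the same properties: D is a free left A-module with basis the monomials x_1^{α_1} x_2^{α_2}⋯x_n^{α_n} for (α_1,…,α_n) ∈ ℤ × ℕ^{n−1} (with x_1 invertible in D), the images of the x_i satisfy the same commutation relations x_j x_i = q_{ij} x_i x_j + Σ_t a_{ij}^{(t)} x_t and x_i a = a x_i + δ_i(a) for a ∈ A, and the induced derivations satisfy δ̄_1 = 0 and δ̄_t(q_{ij}) = δ̄_t(a_{ij}^{(m)}) = 0 for all indices. -/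
/-- An extension `R = O_{q,δ}^{r,n}` of a ring `A`. -/
structure OExt (A : Type*) (R : Type*) [Ring A] [Ring R] (n r : ℕ) where
  hr : 1 ≤ r
  hrn : r ≤ n
  ι : A →+* R
  hι : Function.Injective ι
  x : Fin n → R
  xinv : Fin n → R
  x_mul_xinv : ∀ i : Fin n, i.val < r → x i * xinv i = 1
  xinv_mul_x : ∀ i : Fin n, i.val < r → xinv i * x i = 1
  δ : Fin n → A → A
  δ_add : ∀ i a b, δ i (a + b) = δ i a + δ i b
  δ_mul : ∀ i a b, δ i (a * b) = δ i a * b + a * δ i b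
  x_comm : ∀ (i : Fin n) (a : A), x i * ι a = ι a * x i + ι (δ i a)
  q : Fin n → Fin n → Aˣ
  q_central : ∀ i j (b : A), (q i j : A) * b = b * (q i j : A)
  q_diag : ∀ i, q i i = 1
  q_inv : ∀ i j : Fin n, i < j → q j i = (q i j)⁻¹
  a0 : Fin n → Fin n → A
  ac : Fin n → Fin n → Fin n → A
  a0_central : ∀ i j (b : A), a0 i j * b = b * a0 i j
  ac_central : ∀ i j t (b : A), ac i j t * b = b * ac i j t
  rel : ∀ i j : Fin n, i < j →
    x j * x i = ι (q i j) * (x i * x j) + ι (a0 i j) + ∑ t : Fin n, ι (ac i j t) * x t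
  free : ∀ f : R, ∃! c : (Fin n → ℤ) →₀ A,
    (∀ v ∈ c.support, ∀ i : Fin n, r ≤ i.val → 0 ≤ v i) ∧
    f = c.sum fun v a => ι a *
      ((List.finRange n).map fun i =>
        if 0 ≤ v i then x i ^ (v i).toNat else xinv i ^ (-(v i)).toNat).prod

namespace OExt

variable {A R : Type*} [Ring A] [Ring R] {n r : ℕ} (E : OExt A R n r)

/-- The index of the first variable `x_1`. -/
def i1 : Fin n := ⟨0, Nat.lt_of_lt_of_le E.hr E.hrn⟩

/-- Membership in the exponent set `Z = ℤ^r × ℕ^{n-r}`. -/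
def InZ (_E : OExt A R n r) (v : Fin n → ℤ) : Prop := ∀ i : Fin n, r ≤ i.val → 0 ≤ v i

/-- `x_i^k` for `k : ℤ` (using `xinv` for negative exponents). -/
def xpow (i : Fin n) (k : ℤ) : R :=
  if 0 ≤ k then E.x i ^ k.toNat else E.xinv i ^ (-k).toNat

/-- The monomial `x_1^{v_1} ⋯ x_n^{v_n}`. -/
def mon (v : Fin n → ℤ) : R :=
  ((List.finRange n).map fun i => E.xpow i (v i)).prod

/-- `f = 0` is excluded; `DegLt f N` says `f` is an `A`-combination of basis monomials of
total degree `< N`; by freeness this says `deg f < N`. -/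
def DegLt (f : R) (N : ℤ) : Prop :=
  ∃ c : (Fin n → ℤ) →₀ A,
    (∀ v ∈ c.support, E.InZ v ∧ (∑ i, v i) < N) ∧
    f = c.sum fun v a => E.ι a * E.mon v

/-- `p_{ij}(x_1,…,x_n) = a_{ij}^{(0)} + Σ_t a_{ij}^{(t)} x_t`. -/
def pij (i j : Fin n) : R := E.ι (E.a0 i j) + ∑ t : Fin n, E.ι (E.ac i j t) * E.x t

/-- The standing assumptions on `O_{q,δ}^{r,n}`. -/
structure Standing : Prop where
  δ1 : ∀ a : A, E.δ E.i1 a = 0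
  qunit : ∀ i : Fin n, ∀ m : Fin n → ℤ, E.InZ m → m ≠ 0 →
    IsUnit ((1 : A) -
      ((((List.finRange n).map fun j =>
        if j = i then (1 : Aˣ) else E.q i j ^ m j).prod : Aˣ) : A))
  δq : ∀ t i j : Fin n, E.δ t (E.q i j : A) = 0
  δa0 : ∀ t i j : Fin n, E.δ t (E.a0 i j) = 0
  δac : ∀ t i j m : Fin n, E.δ t (E.ac i j m) = 0
  a0_first : ∀ j : Fin n, E.a0 E.i1 j = 0
  ac_vanish : ∀ i j t : Fin n, i.val < r → i < j → i ≤ t → E.ac i j t = 0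

/-- A toric automorphism `γ` of `R`: `γ(x_i) = γ_i x_i`. -/
structure ToricAut where
  γ : R ≃+* R
  c : Fin n → A
  hc : ∀ i, γ (E.x i) = E.ι (c i) * E.x i

/-- `[ad_γ z] a = z a − γ(a) z`. -/
def adg (γfun : R → R) (z a : R) : R := z * a - γfun a * z

/-- A twisted derivation `d` on `R`. -/
structure TwistedDer where
  d : R → R
  d_add : ∀ a b, d (a + b) = d a + d b
  γ : E.ToricAut
  N : ℕ
  θ : Fin N → A
  α : Fin N → E.ToricAut
  β : Fin N → E.ToricAut
  d_mul : ∀ a b, d (a * b) =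
    d a * b + γ.γ a * d b + ∑ s : Fin N, E.ι (θ s) * ((α s).γ a * ((β s).γ b))

/-- Equation (1) for a tuple `u` with constants `θij, θh, K, K', θ`. -/
def Eq1 (γ : E.ToricAut) (u : Fin n → R) (θij θh K K' : Fin n → Fin n → A) (θ : A) : Prop :=
  ∀ i j : Fin n, i < j →
    u j * E.x i + γ.γ (E.x j) * u i - E.ι (E.q i j) * (u i * E.x j)
      - E.ι (E.q i j) * (γ.γ (E.x i) * u j)
      + E.ι (θij i j) * (E.x i * E.x j) + E.ι (K i j) * E.x i + E.ι (K' i j) * E.x j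
      + E.ι (θh i j) * E.pij i j
      - (∑ t : Fin n, E.ι (E.ac i j t) * u t)
      + E.ι (E.a0 i j) * E.ι θ = 0

end OExt

/-- A Poisson bracket on a ring `S`. -/
structure PoissonBracket (S : Type*) [Ring S] where
  br : S → S → S
  add_left : ∀ a b c, br (a + b) c = br a c + br b c
  add_right : ∀ a b c, br a (b + c) = br a b + br a c
  br_self : ∀ a, br a a = 0
  jacobi : ∀ a b c, br a (br b c) + br b (br c a) + br c (br a b) = 0
  leibniz : ∀ a b c, br (a * b) c = br a c * b + a * br b c
  antisymm : ∀ a b, br a b + br b a = 0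

/-- The data of an Ore localization of a skew PBW extension `B` at the powers of `x_1`:
a ring `D` in which `B` embeds, which is an extension of `A` of type `O_{q,δ}^{1,n}`
with the same constants. -/
structure SkewPBWLoc (A B : Type) [Ring A] [Ring B] (n : ℕ) (S : SkewPBW A B n) where
  D : Type
  [instD : Ring D]
  φ : B →+* D
  hφ : Function.Injective φ
  E : OExt A D n 1
  hEι : E.ι = φ.comp S.ι
  hEx : ∀ i, E.x i = φ (S.x i)
  hEq : ∀ i j : Fin n, i < j → (E.q i j : A) = S.q i j
  hEa0 : E.a0 = S.a0
  hEac : E.ac = S.ac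
  hEδ : E.δ = S.δ

attribute [instance] SkewPBWLoc.instD

namespace Stmt14Aux

variable {A B : Type} [Ring A] [Ring B] {m : ℕ}

/-- Bundled standing hypotheses. -/
structure Hyp (S : SkewPBW A B (m+1)) : Prop where
  hσ : ∀ (i : Fin (m+1)) (a : A), S.σ i a = a
  hqc : ∀ (i j : Fin (m+1)) (b : A), S.q i j * b = b * S.q i j
  hacc : ∀ (i j t : Fin (m+1)) (b : A), S.ac i j t * b = b * S.ac i j t
  ha0c : ∀ (i j : Fin (m+1)) (b : A), S.a0 i j * b = b * S.a0 i j
  hqu : ∀ i j : Fin (m+1), i < j → IsUnit (S.q i j)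
  hδ1 : ∀ a : A, S.δ 0 a = 0
  hδq : ∀ t i j : Fin (m+1), S.δ t (S.q i j) = 0
  hδa0 : ∀ t i j : Fin (m+1), S.δ t (S.a0 i j) = 0
  hδac : ∀ t i j mm : Fin (m+1), S.δ t (S.ac i j mm) = 0
  hp1a0 : ∀ j : Fin (m+1), S.a0 0 j = 0
  hp1ac : ∀ j t : Fin (m+1), S.ac 0 j t = 0

variable {S : SkewPBW A B (m+1)}

/-- The monomial basis of `B`. -/
def monB (S : SkewPBW A B (m+1)) (v : Fin (m+1) → ℕ) : B :=
  ((List.finRange (m+1)).map fun i => S.x i ^ v i).prod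

lemma δ_one (t : Fin (m+1)) : S.δ t 1 = 0 := by
  have h := S.δ_mul t 1 1
  simp only [mul_one, map_one, one_mul] at h
  have := congrArg (fun z => z - S.δ t 1) h
  simpa using this.symm

lemma δ_inv (t : Fin (m+1)) (u : Aˣ) (hu : S.δ t (u : A) = 0) : S.δ t ((u⁻¹ : Aˣ) : A) = 0 := by
  have h := S.δ_mul t ((u⁻¹ : Aˣ) : A) (u : A)
  rw [Units.inv_mul, δ_one, hu, mul_zero, zero_add] at h
  have := congrArg (fun z => z * ((u⁻¹ : Aˣ) : A)) h.symm
  simpa [mul_assoc] using this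

/-- "Fully central" elements of `A` relative to `S`. -/
def Cent (S : SkewPBW A B (m+1)) (c : A) : Prop :=
  (∀ b : A, c * b = b * c) ∧ ∀ t, S.δ t c = 0

lemma Cent.one : Cent S (1 : A) := ⟨fun b => by simp, fun t => δ_one t⟩

lemma Cent.mul {c d : A} (hc : Cent S c) (hd : Cent S d) : Cent S (c * d) := by
  refine ⟨fun b => by rw [mul_assoc, hd.1 b, ← mul_assoc, hc.1 b, mul_assoc], fun t => ?_⟩
  rw [S.δ_mul, hc.2 t, hd.2 t, mul_zero, zero_mul, add_zero]

lemma Cent.pow {c : A} (hc : Cent S c) (k : ℕ) : Cent S (c ^ k) := by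
  induction k with
  | zero => simpa using Cent.one
  | succ k ih => rw [pow_succ]; exact ih.mul hc

lemma Cent.unit_inv (u : Aˣ) (hc : Cent S (u : A)) : Cent S ((u⁻¹ : Aˣ) : A) := by
  refine ⟨fun b => ?_, fun t => δ_inv t u (hc.2 t)⟩
  have : Commute (u : A) b := hc.1 b
  exact (this.units_inv_left).eq

/-- Central elements commute with the generators. -/
lemma cent_comm_x (hσ : ∀ (i : Fin (m+1)) (a : A), S.σ i a = a) {c : A} (hc : Cent S c)
    (i : Fin (m+1)) : Commute (S.ι c) (S.x i) := by
  have h := S.x_comm i c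
  rw [hσ, hc.2 i, map_zero, add_zero] at h
  exact h.symm


section WithHyp

/-- The commutation units `q_{1j}` (with `q_{11} = 1`). -/
noncomputable def q0 (H : Hyp S) (j : Fin (m+1)) : Aˣ :=
  if h : (0 : Fin (m+1)) < j then (H.hqu 0 j h).unit else 1

lemma cent_q0 (H : Hyp S) (j : Fin (m+1)) : Cent S ((q0 H j : Aˣ) : A) := by
  unfold q0
  split
  · rename_i h
    rw [IsUnit.unit_spec]
    exact ⟨H.hqc 0 j, fun t => H.hδq t 0 j⟩
  · simpa using Cent.one

lemma x1_comm_ι (H : Hyp S) (a : A) : S.x 0 * S.ι a = S.ι a * S.x 0 := by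
  have h := S.x_comm 0 a
  rw [H.hσ, H.hδ1, map_zero, add_zero] at h
  exact h

lemma xj_x1 (H : Hyp S) (j : Fin (m+1)) :
    S.x j * S.x 0 = S.ι ((q0 H j : Aˣ) : A) * (S.x 0 * S.x j) := by
  unfold q0
  split
  · rename_i h
    have hr := S.rel 0 j h
    rw [H.hp1a0, map_zero] at hr
    simp only [H.hp1ac, map_zero, zero_mul, Finset.sum_const_zero, add_zero] at hr
    rw [IsUnit.unit_spec]
    exact hr
  · rename_i h
    have hj : j = 0 := by
      simpa [Fin.pos_iff_ne_zero, not_not] using h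
    subst hj
    simp

lemma xpow_x1 (H : Hyp S) (j : Fin (m+1)) (k : ℕ) :
    S.x j ^ k * S.x 0 = S.ι (((q0 H j : Aˣ) : A) ^ k) * (S.x 0 * S.x j ^ k) := by
  induction k with
  | zero => simp
  | succ k ih =>
      have hc : Commute (S.ι (((q0 H j : Aˣ) : A) ^ k)) (S.x j) :=
        cent_comm_x H.hσ ((cent_q0 H j).pow k) j
      calc S.x j ^ (k+1) * S.x 0 = S.x j * (S.x j ^ k * S.x 0) := by
            rw [pow_succ']; rw [mul_assoc]
        _ = S.x j * (S.ι (((q0 H j : Aˣ) : A) ^ k) * (S.x 0 * S.x j ^ k)) := by rw [ih]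
        _ = S.ι (((q0 H j : Aˣ) : A) ^ k) * ((S.x j * S.x 0) * S.x j ^ k) := by
            rw [← mul_assoc, ← hc.eq, mul_assoc, mul_assoc]
        _ = S.ι (((q0 H j : Aˣ) : A) ^ k) * ((S.ι ((q0 H j : Aˣ) : A) * (S.x 0 * S.x j)) * S.x j ^ k) := by
            rw [xj_x1 H j]
        _ = S.ι (((q0 H j : Aˣ) : A) ^ (k+1)) * (S.x 0 * S.x j ^ (k+1)) := by
            rw [pow_succ, map_mul, pow_succ']
            simp [mul_assoc]

/-- The twisting unit for moving `x_1` from the right of a monomial to the left. -/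
noncomputable def uB (H : Hyp S) (v : Fin (m+1) → ℕ) : Aˣ :=
  ((List.finRange (m+1)).map fun j => q0 H j ^ v j).prod

lemma cent_prod_q0 (H : Hyp S) (v : Fin (m+1) → ℕ) (l : List (Fin (m+1))) :
    Cent S (((l.map fun j => q0 H j ^ v j).prod : Aˣ) : A) := by
  induction l with
  | nil => simpa using Cent.one
  | cons a l ihl =>
      simp only [List.map_cons, List.prod_cons, Units.val_mul]
      exact ((cent_q0 H a).pow (v a)).mul ihl

lemma list_mul_x1 (H : Hyp S) (v : Fin (m+1) → ℕ) (l : List (Fin (m+1))) :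
    ((l.map fun i => S.x i ^ v i).prod) * S.x 0
      = S.ι (((l.map fun j => q0 H j ^ v j).prod : Aˣ) : A)
          * (S.x 0 * (l.map fun i => S.x i ^ v i).prod) := by
  induction l with
  | nil => simp
  | cons i l ih =>
      have hc : Commute (S.ι (((l.map fun j => q0 H j ^ v j).prod : Aˣ) : A)) (S.x i ^ v i) :=
        (cent_comm_x H.hσ (cent_prod_q0 H v l) i).pow_right (v i)
      have hcomm : Commute (S.ι (((l.map fun j => q0 H j ^ v j).prod : Aˣ) : A))
          (S.ι (((q0 H i : Aˣ) : A) ^ v i)) := by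
        show _ = _
        rw [← map_mul, ← map_mul]
        exact congrArg S.ι (((cent_q0 H i).pow (v i)).1 _).symm
      simp only [List.map_cons, List.prod_cons]
      calc S.x i ^ v i * (l.map fun i => S.x i ^ v i).prod * S.x 0
          = S.x i ^ v i * ((l.map fun i => S.x i ^ v i).prod * S.x 0) := by rw [mul_assoc]
        _ = S.x i ^ v i * (S.ι (((l.map fun j => q0 H j ^ v j).prod : Aˣ) : A)
              * (S.x 0 * (l.map fun i => S.x i ^ v i).prod)) := by rw [ih]
        _ = S.ι (((l.map fun j => q0 H j ^ v j).prod : Aˣ) : A)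
              * ((S.x i ^ v i * S.x 0) * (l.map fun i => S.x i ^ v i).prod) := by
            rw [← mul_assoc, ← hc.eq, mul_assoc, mul_assoc]
        _ = S.ι (((l.map fun j => q0 H j ^ v j).prod : Aˣ) : A)
              * ((S.ι ((((q0 H i) : Aˣ) : A) ^ v i) * (S.x 0 * S.x i ^ v i))
                  * (l.map fun i => S.x i ^ v i).prod) := by
            rw [xpow_x1 H i (v i)]
        _ = S.ι (((q0 H i ^ v i * (l.map fun j => q0 H j ^ v j).prod : Aˣ) : A))
              * (S.x 0 * (S.x i ^ v i * (l.map fun i => S.x i ^ v i).prod)) := by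
            simp only [Units.val_mul, map_mul, Units.val_pow_eq_pow_val, mul_assoc]
            exact hcomm.left_comm _

lemma monB_mul_x1 (H : Hyp S) (v : Fin (m+1) → ℕ) :
    monB S v * S.x 0 = S.ι ((uB H v : Aˣ) : A) * (S.x 0 * monB S v) :=
  list_mul_x1 H v _

end WithHyp

lemma prod_decomp {R : Type*} [Monoid R] (G : Fin (m+1) → R) :
    ((List.finRange (m+1)).map G).prod = G 0 * ((List.finRange m).map fun i => G i.succ).prod := by
  rw [List.finRange_succ, List.map_cons, List.prod_cons, List.map_map]
  rfl

/-- Increment the first exponent. -/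
def sft (v : Fin (m+1) → ℕ) : Fin (m+1) → ℕ := Function.update v 0 (v 0 + 1)

lemma sft_inj : Function.Injective (sft (m := m)) := by
  intro v w h
  funext i
  by_cases hi : i = 0
  · subst hi
    have := congrFun h 0
    simpa [sft] using this
  · have := congrFun h i
    simpa [sft, Function.update_of_ne hi] using this

lemma x1_mul_monB (v : Fin (m+1) → ℕ) : S.x 0 * monB S v = monB S (sft v) := by
  unfold monB sft
  rw [prod_decomp, prod_decomp]
  have htail : ((List.finRange m).map fun i => S.x i.succ ^ Function.update v 0 (v 0 + 1) i.succ)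
      = (List.finRange m).map fun i => S.x i.succ ^ v i.succ := by
    apply List.map_congr_left
    intro i _
    rw [Function.update_of_ne (Fin.succ_ne_zero i)]
  rw [htail, Function.update_self, pow_succ', ← mul_assoc]

/-- Existence of the basis representation. -/
lemma repr_exists (f : B) : ∃ c : (Fin (m+1) → ℕ) →₀ A, f = c.sum fun v a => S.ι a * monB S v :=
  (S.free f).exists

lemma repr_zero {c : (Fin (m+1) → ℕ) →₀ A}
    (h : (c.sum fun v a => S.ι a * monB S v) = 0) : c = 0 :=
  (S.free 0).unique h.symm (by simp)

section Scale

variable {α β : Type*}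

lemma single_sum_sum (c : α →₀ A) (g : α → β) (u : α → A → A)
    {R' : Type*} [AddCommMonoid R'] (F : β → A → R')
    (hF0 : ∀ k, F k 0 = 0) (hFa : ∀ k a b, F k (a + b) = F k a + F k b) :
    (c.sum fun v a => Finsupp.single (g v) (u v a)).sum F
      = c.sum fun v a => F (g v) (u v a) := by
  classical
  rw [Finsupp.sum_sum_index (fun k => hF0 k) (fun k a b => hFa k a b)]
  exact Finsupp.sum_congr fun v _ => Finsupp.sum_single_index (hF0 _)

lemma single_sum_apply [DecidableEq β] (c : α →₀ A) (g : α → β) (u : α → A → A)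
    (hginj : ∀ v ∈ c.support, ∀ w ∈ c.support, g v = g w → v = w)
    (w : α) (hw : w ∈ c.support) :
    (c.sum fun v a => Finsupp.single (g v) (u v a)) (g w) = u w (c w) := by
  classical
  rw [Finsupp.sum_apply, Finsupp.sum, Finset.sum_eq_single_of_mem w hw]
  · simp
  · intro v hv hne
    exact Finsupp.single_eq_of_ne fun hgeq => hne (hginj v hv w hw hgeq.symm)

end Scale

section WithHyp2

lemma sum_mul_x1 (H : Hyp S) (c : (Fin (m+1) → ℕ) →₀ A) :
    (c.sum fun v a => S.ι a * monB S v) * S.x 0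
      = c.sum fun v a => S.ι (a * ((uB H v : Aˣ) : A)) * monB S (sft v) := by
  rw [Finsupp.sum_mul]
  apply Finsupp.sum_congr
  intro v _
  calc S.ι (c v) * monB S v * S.x 0 = S.ι (c v) * (monB S v * S.x 0) := by rw [mul_assoc]
    _ = S.ι (c v) * (S.ι ((uB H v : Aˣ) : A) * (S.x 0 * monB S v)) := by rw [monB_mul_x1]
    _ = S.ι (c v * ((uB H v : Aˣ) : A)) * monB S (sft v) := by
        rw [x1_mul_monB, ← mul_assoc, ← map_mul]

lemma x1_mul_sum (H : Hyp S) (c : (Fin (m+1) → ℕ) →₀ A) :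
    S.x 0 * (c.sum fun v a => S.ι a * monB S v)
      = c.sum fun v a => S.ι a * monB S (sft v) := by
  rw [Finsupp.mul_sum]
  apply Finsupp.sum_congr
  intro v _
  rw [← mul_assoc, x1_comm_ι H, mul_assoc, x1_mul_monB]

lemma coeffs_zero {c : (Fin (m+1) → ℕ) →₀ A} (g : (Fin (m+1) → ℕ) → (Fin (m+1) → ℕ))
    (hg : Function.Injective g) (u : (Fin (m+1) → ℕ) → Aˣ)
    (h : (c.sum fun v a => S.ι (a * ((u v : Aˣ) : A)) * monB S (g v)) = 0) : c = 0 := by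
  classical
  have hd : (c.sum fun v a => Finsupp.single (g v) (a * ((u v : Aˣ) : A))) = 0 := by
    apply repr_zero (S := S)
    rw [single_sum_sum c g (fun v a => a * ((u v : Aˣ) : A)) (fun v a => S.ι a * monB S v)
      (fun k => by simp) (fun k a b => by show S.ι (a + b) * monB S k = _; rw [map_add, add_mul])]
    exact h
  ext v
  by_cases hv : v ∈ c.support
  · have := single_sum_apply c g (fun v a => a * ((u v : Aˣ) : A))
      (fun v _ w _ hvw => hg hvw) v hv
    rw [hd] at this
    have h0 : c v * ((u v : Aˣ) : A) = 0 := by simpa using this.symm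
    have : c v = (c v * ((u v : Aˣ) : A)) * (((u v)⁻¹ : Aˣ) : A) := by
      rw [mul_assoc]; simp
    rw [h0, zero_mul] at this
    simpa using this
  · simpa using Finsupp.notMem_support_iff.mp hv

lemma x1_right_reg (H : Hyp S) (f : B) (h : f * S.x 0 = 0) : f = 0 := by
  obtain ⟨c, rfl⟩ := repr_exists (S := S) f
  rw [sum_mul_x1 H] at h
  rw [coeffs_zero (S := S) sft sft_inj (uB H) h]
  simp

lemma x1_left_reg (H : Hyp S) (f : B) (h : S.x 0 * f = 0) : f = 0 := by
  obtain ⟨c, rfl⟩ := repr_exists (S := S) f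
  rw [x1_mul_sum H] at h
  have h' : (c.sum fun v a => S.ι (a * ((1 : Aˣ) : A)) * monB S (sft v)) = 0 := by
    simpa using h
  rw [coeffs_zero (S := S) sft sft_inj (fun _ => 1) h']
  simp

lemma ore_swap (H : Hyp S) (f : B) : ∃ g : B, S.x 0 * f = g * S.x 0 := by
  obtain ⟨c, rfl⟩ := repr_exists (S := S) f
  refine ⟨c.sum fun v a => S.ι (a * (((uB H v)⁻¹ : Aˣ) : A)) * monB S v, ?_⟩
  rw [x1_mul_sum H, Finsupp.sum_mul]
  apply Finsupp.sum_congr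
  intro v _
  calc S.ι (c v) * monB S (sft v)
      = S.ι ((c v * (((uB H v)⁻¹ : Aˣ) : A)) * ((uB H v : Aˣ) : A)) * monB S (sft v) := by
        rw [mul_assoc]; simp
    _ = S.ι (c v * (((uB H v)⁻¹ : Aˣ) : A)) * (S.ι ((uB H v : Aˣ) : A) * monB S (sft v)) := by
        rw [map_mul, mul_assoc]
    _ = S.ι (c v * (((uB H v)⁻¹ : Aˣ) : A)) * (monB S v * S.x 0) := by
        rw [← x1_mul_monB, ← monB_mul_x1 H]
    _ = S.ι (c v * (((uB H v)⁻¹ : Aˣ) : A)) * monB S v * S.x 0 := by rw [mul_assoc]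


lemma x1pow_right_reg (H : Hyp S) (k : ℕ) (f : B) (h : f * S.x 0 ^ k = 0) : f = 0 := by
  induction k generalizing f with
  | zero => simpa using h
  | succ k ih =>
      rw [pow_succ, ← mul_assoc] at h
      exact ih _ (x1_right_reg H _ h)

lemma x1pow_left_reg (H : Hyp S) (k : ℕ) (f : B) (h : S.x 0 ^ k * f = 0) : f = 0 := by
  induction k generalizing f with
  | zero => simpa using h
  | succ k ih =>
      rw [pow_succ', mul_assoc] at h
      exact ih _ (x1_left_reg H _ h)

lemma ore_swap_pow (H : Hyp S) (k : ℕ) (f : B) : ∃ g : B, S.x 0 ^ k * f = g * S.x 0 ^ k := by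
  induction k generalizing f with
  | zero => exact ⟨f, by simp⟩
  | succ k ih =>
      obtain ⟨g, hg⟩ := ore_swap H f
      obtain ⟨g', hg'⟩ := ih g
      refine ⟨g', ?_⟩
      calc S.x 0 ^ (k+1) * f = S.x 0 ^ k * (S.x 0 * f) := by rw [pow_succ, mul_assoc]
        _ = S.x 0 ^ k * (g * S.x 0) := by rw [hg]
        _ = (S.x 0 ^ k * g) * S.x 0 := by rw [mul_assoc]
        _ = (g' * S.x 0 ^ k) * S.x 0 := by rw [hg']
        _ = g' * S.x 0 ^ (k+1) := by rw [mul_assoc, ← pow_succ]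

/-- The multiplicative set of powers of `x_1`. -/
def Smon (S : SkewPBW A B (m+1)) : Submonoid B := Submonoid.powers (S.x 0)

lemma oreSet_nonempty (H : Hyp S) : Nonempty (OreLocalization.OreSet (Smon S)) := by
  rw [OreLocalization.nonempty_oreSet_iff]
  constructor
  · intro r₁ r₂ s hs
    refine ⟨1, ?_⟩
    obtain ⟨k, hk⟩ := s.2
    have h0 : (r₁ - r₂) * (s : B) = 0 := by rw [sub_mul, hs, sub_self]
    rw [← hk] at h0
    have h1 := x1pow_right_reg H k _ h0
    rw [sub_eq_zero] at h1
    rw [h1]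
  · intro r s
    obtain ⟨k, hk⟩ := s.2
    obtain ⟨g, hg⟩ := ore_swap_pow H k r
    exact ⟨g, s, by rw [← hk]; exact hg⟩

end WithHyp2

lemma inv_comm_of_comm {M : Type*} [Monoid M] {u v c : M} (huv : u * v = 1) (hvu : v * u = 1)
    (h : u * c = c * u) : v * c = c * v := by
  calc v * c = v * c * (u * v) := by rw [huv, mul_one]
    _ = v * ((c * u) * v) := by simp [mul_assoc]
    _ = v * ((u * c) * v) := by rw [h]
    _ = (v * u) * (c * v) := by simp [mul_assoc]
    _ = c * v := by rw [hvu, one_mul]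

lemma pow_mul_pow_one {M : Type*} [Monoid M] {u v : M} (huv : u * v = 1) (k : ℕ) :
    u ^ k * v ^ k = 1 := by
  induction k with
  | zero => simp
  | succ k ih =>
      calc u ^ (k+1) * v ^ (k+1) = (u * u ^ k) * (v ^ k * v) := by rw [pow_succ', pow_succ]
        _ = u * ((u ^ k * v ^ k) * v) := by simp [mul_assoc]
        _ = u * v := by rw [ih, one_mul]
        _ = 1 := huv

section Dside

open OreLocalization

variable [inst : OreLocalization.OreSet (Smon S)]

/-- `x_1` as an element of the multiplicative set. -/
def x1S (S : SkewPBW A B (m+1)) : Smon S := ⟨S.x 0, Submonoid.mem_powers _⟩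

/-- The inverse of `x_1` in the localization. -/
noncomputable def yD (S : SkewPBW A B (m+1)) [OreLocalization.OreSet (Smon S)] :
    OreLocalization (Smon S) B := (1 : B) /ₒ x1S S

noncomputable abbrev φD (S : SkewPBW A B (m+1)) [OreLocalization.OreSet (Smon S)] :
    B →+* OreLocalization (Smon S) B := numeratorRingHom

lemma phi_apply (r : B) : φD S r = r /ₒ (1 : Smon S) := rfl

lemma Yy : φD S (S.x 0) * yD S = 1 := by
  have h := OreLocalization.mul_inv (x1S S) (1 : Smon S)
  rw [Submonoid.coe_one] at h
  exact h

lemma yY : yD S * φD S (S.x 0) = 1 := by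
  have h := OreLocalization.one_div_mul (r := S.x 0) (s := (1 : Smon S)) (t := x1S S)
  rw [yD, phi_apply]
  rw [h, one_mul]
  exact OreLocalization.div_eq_one (s := x1S S)

lemma phi_inj (H : Hyp S) : Function.Injective (φD S) := by
  have h : Smon S ≤ nonZeroDivisorsLeft B := by
    intro s hs
    rw [mem_nonZeroDivisorsLeft_iff]
    intro yy hyy
    obtain ⟨k, hk⟩ := hs
    rw [← hk] at hyy
    exact x1pow_left_reg H k _ hyy
  exact OreLocalization.numeratorHom_inj h

lemma D_decomp (d : OreLocalization (Smon S) B) : ∃ (r : B) (k : ℕ), d = yD S ^ k * φD S r := by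
  induction d using OreLocalization.ind with
  | _ r s =>
    obtain ⟨k, hk⟩ := s.2
    have hk' : S.x 0 ^ k = (s : B) := hk
    refine ⟨r, k, ?_⟩
    have hY : φD S (S.x 0) ^ k = ((s : B) /ₒ (1 : Smon S)) := by
      rw [← map_pow, hk', phi_apply]
    have h1 : φD S (S.x 0) ^ k * (r /ₒ s) = φD S r := by
      rw [hY, phi_apply]
      exact OreLocalization.mul_cancel
    calc r /ₒ s = (yD S ^ k * φD S (S.x 0) ^ k) * (r /ₒ s) := by
          rw [pow_mul_pow_one (yY (S := S)) k, one_mul]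
      _ = yD S ^ k * (φD S (S.x 0) ^ k * (r /ₒ s)) := by rw [mul_assoc]
      _ = yD S ^ k * φD S r := by rw [h1]

/-- The `ℤ`-exponent monomials in the localization. -/
noncomputable def monD (S : SkewPBW A B (m+1)) [OreLocalization.OreSet (Smon S)]
    (w : Fin (m+1) → ℤ) : OreLocalization (Smon S) B :=
  ((List.finRange (m+1)).map fun i =>
    if 0 ≤ w i then (φD S (S.x i)) ^ (w i).toNat
    else yD S ^ (-(w i)).toNat).prod

lemma Y_mul_head (z : ℤ) :
    φD S (S.x 0) * (if 0 ≤ z then φD S (S.x 0) ^ z.toNat else yD S ^ (-z).toNat)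
      = (if 0 ≤ z + 1 then φD S (S.x 0) ^ (z+1).toNat else yD S ^ (-(z+1)).toNat) := by
  by_cases h0 : 0 ≤ z
  · rw [if_pos h0, if_pos (by omega : (0:ℤ) ≤ z + 1),
      show (z+1).toNat = z.toNat + 1 from by omega, pow_succ']
  · rw [if_neg h0]
    obtain ⟨k, hk⟩ : ∃ k : ℕ, (-z).toNat = k + 1 := ⟨(-z).toNat - 1, by omega⟩
    rw [hk, pow_succ', ← mul_assoc, Yy, one_mul]
    by_cases h1 : 0 ≤ z + 1
    · rw [if_pos h1, show (z+1).toNat = 0 from by omega, pow_zero,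
        show k = 0 from by omega, pow_zero]
    · rw [if_neg h1]
      congr 1
      omega

lemma y_mul_head (z : ℤ) :
    yD S * (if 0 ≤ z then φD S (S.x 0) ^ z.toNat else yD S ^ (-z).toNat)
      = (if 0 ≤ z - 1 then φD S (S.x 0) ^ (z-1).toNat else yD S ^ (-(z-1)).toNat) := by
  by_cases h0 : 0 ≤ z
  · rw [if_pos h0]
    by_cases h1 : 0 ≤ z - 1
    · obtain ⟨k, hk⟩ : ∃ k : ℕ, z.toNat = k + 1 := ⟨z.toNat - 1, by omega⟩
      rw [hk, pow_succ', ← mul_assoc, yY, one_mul, if_pos h1,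
        show (z-1).toNat = k from by omega]
    · rw [show z.toNat = 0 from by omega, pow_zero, mul_one, if_neg h1,
        show (-(z-1)).toNat = 1 from by omega, pow_one]
  · rw [if_neg h0, if_neg (by omega : ¬ (0:ℤ) ≤ z - 1),
      show (-(z-1)).toNat = (-z).toNat + 1 from by omega, pow_succ']

lemma Y_mul_monD (w : Fin (m+1) → ℤ) :
    φD S (S.x 0) * monD S w = monD S (Function.update w 0 (w 0 + 1)) := by
  unfold monD
  rw [prod_decomp, prod_decomp, ← mul_assoc]
  have htail : ((List.finRange m).map fun i =>
      if 0 ≤ Function.update w 0 (w 0 + 1) i.succ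
      then (φD S (S.x i.succ)) ^ (Function.update w 0 (w 0 + 1) i.succ).toNat
      else yD S ^ (-(Function.update w 0 (w 0 + 1) i.succ)).toNat)
      = (List.finRange m).map fun i =>
        if 0 ≤ w i.succ then (φD S (S.x i.succ)) ^ (w i.succ).toNat
        else yD S ^ (-(w i.succ)).toNat := by
    apply List.map_congr_left
    intro i _
    rw [Function.update_of_ne (Fin.succ_ne_zero i)]
  rw [htail]
  congr 1
  rw [Function.update_self]
  exact Y_mul_head (w 0)

lemma y_mul_monD (w : Fin (m+1) → ℤ) :
    yD S * monD S w = monD S (Function.update w 0 (w 0 - 1)) := by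
  unfold monD
  rw [prod_decomp, prod_decomp, ← mul_assoc]
  have htail : ((List.finRange m).map fun i =>
      if 0 ≤ Function.update w 0 (w 0 - 1) i.succ
      then (φD S (S.x i.succ)) ^ (Function.update w 0 (w 0 - 1) i.succ).toNat
      else yD S ^ (-(Function.update w 0 (w 0 - 1) i.succ)).toNat)
      = (List.finRange m).map fun i =>
        if 0 ≤ w i.succ then (φD S (S.x i.succ)) ^ (w i.succ).toNat
        else yD S ^ (-(w i.succ)).toNat := by
    apply List.map_congr_left
    intro i _
    rw [Function.update_of_ne (Fin.succ_ne_zero i)]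
  rw [htail]
  congr 1
  rw [Function.update_self]
  exact y_mul_head (w 0)

lemma Ypow_mul_monD (k : ℕ) (w : Fin (m+1) → ℤ) :
    φD S (S.x 0) ^ k * monD S w = monD S (Function.update w 0 (w 0 + k)) := by
  induction k generalizing w with
  | zero => simp [Function.update_eq_self]
  | succ k ih =>
      rw [pow_succ, mul_assoc, Y_mul_monD, ih, Function.update_idem, Function.update_self]
      congr 1
      push_cast
      ring

lemma ypow_mul_monD (k : ℕ) (w : Fin (m+1) → ℤ) :
    yD S ^ k * monD S w = monD S (Function.update w 0 (w 0 - k)) := by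
  induction k generalizing w with
  | zero => simp [Function.update_eq_self]
  | succ k ih =>
      rw [pow_succ, mul_assoc, y_mul_monD, ih, Function.update_idem, Function.update_self]
      congr 1
      push_cast
      ring

lemma monD_of_nat (v : Fin (m+1) → ℕ) :
    monD S (fun i => (v i : ℤ)) = φD S (monB S v) := by
  unfold monD monB
  rw [map_list_prod, List.map_map]
  apply congrArg List.prod
  apply List.map_congr_left
  intro i _
  simp [map_pow]
  exact (map_pow (φD S) _ _).symm

end Dside

section Dside2

open OreLocalization

variable [inst : OreLocalization.OreSet (Smon S)]

lemma Y_comm_ιD (H : Hyp S) (a : A) :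
    φD S (S.x 0) * φD S (S.ι a) = φD S (S.ι a) * φD S (S.x 0) := by
  rw [← map_mul, ← map_mul, x1_comm_ι H]

lemma y_comm_ιD (H : Hyp S) (a : A) :
    yD S * φD S (S.ι a) = φD S (S.ι a) * yD S :=
  inv_comm_of_comm (Yy (S := S)) (yY (S := S)) (Y_comm_ιD H a)

lemma ypow_comm_ιD (H : Hyp S) (k : ℕ) (a : A) :
    yD S ^ k * φD S (S.ι a) = φD S (S.ι a) * yD S ^ k :=
  ((show Commute (yD S) (φD S (S.ι a)) from y_comm_ιD H a).pow_left k).eq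

lemma Ypow_comm_ιD (H : Hyp S) (k : ℕ) (a : A) :
    φD S (S.x 0) ^ k * φD S (S.ι a) = φD S (S.ι a) * φD S (S.x 0) ^ k :=
  ((show Commute (φD S (S.x 0)) (φD S (S.ι a)) from Y_comm_ιD H a).pow_left k).eq

lemma freeD_exists (H : Hyp S) (f : OreLocalization (Smon S) B) :
    ∃ e : (Fin (m+1) → ℤ) →₀ A,
      (∀ w ∈ e.support, ∀ i : Fin (m+1), (1:ℕ) ≤ i.val → 0 ≤ w i) ∧
      f = e.sum fun w a => φD S (S.ι a) * monD S w := by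
  classical
  obtain ⟨r, k, rfl⟩ := D_decomp (S := S) f
  obtain ⟨c, rfl⟩ := repr_exists (S := S) r
  set g : (Fin (m+1) → ℕ) → (Fin (m+1) → ℤ) :=
    fun v => Function.update (fun i => ((v i : ℤ))) 0 ((v 0 : ℤ) - k) with hg
  refine ⟨c.sum fun v a => Finsupp.single (g v) a, ?_, ?_⟩
  · intro w hw i hi
    have hmem := Finsupp.support_sum hw
    rw [Finset.mem_biUnion] at hmem
    obtain ⟨v, hv, hw'⟩ := hmem
    have hw'' : w = g v := by
      have := Finsupp.support_single_subset hw'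
      simpa using this
    have hi0 : i ≠ 0 := by
      intro h0
      rw [h0] at hi
      simp at hi
    rw [hw'', hg]
    simp only [Function.update_of_ne hi0]
    exact Int.natCast_nonneg _
  · rw [single_sum_sum c g (fun _ a => a) (fun w a => φD S (S.ι a) * monD S w)
      (fun w => by simp) (fun w a b => by show (φD S) (S.ι (a+b)) * monD S w = _; rw [map_add, map_add, add_mul])]
    rw [map_finsuppSum, Finsupp.mul_sum]
    apply Finsupp.sum_congr
    intro v hv
    rw [map_mul, ← monD_of_nat]
    calc yD S ^ k * (φD S (S.ι (c v)) * monD S (fun i => ((v i : ℤ))))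
        = φD S (S.ι (c v)) * (yD S ^ k * monD S (fun i => ((v i : ℤ)))) := by
          rw [← mul_assoc, ypow_comm_ιD H, mul_assoc]
      _ = φD S (S.ι (c v)) * monD S (g v) := by rw [ypow_mul_monD]

/-- Shift by `K` in the first coordinate and truncate to `ℕ`. -/
def tnn (K : ℕ) (w : Fin (m+1) → ℤ) : Fin (m+1) → ℕ :=
  fun i => (Function.update w 0 (w 0 + K) i).toNat

lemma tnn_zero (K : ℕ) (w : Fin (m+1) → ℤ) : tnn K w 0 = (w 0 + K).toNat := by
  rw [tnn, Function.update_self]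

lemma tnn_ne (K : ℕ) (w : Fin (m+1) → ℤ) {i : Fin (m+1)} (hi : i ≠ 0) :
    tnn K w i = (w i).toNat := by
  rw [tnn, Function.update_of_ne hi]

lemma zeroD (H : Hyp S) {d : (Fin (m+1) → ℤ) →₀ A}
    (hZ : ∀ w ∈ d.support, ∀ i : Fin (m+1), (1:ℕ) ≤ i.val → 0 ≤ w i)
    (h : (d.sum fun w a => φD S (S.ι a) * monD S w) = 0) : d = 0 := by
  classical
  obtain ⟨K, hKle⟩ : ∃ K : ℕ, ∀ w ∈ d.support, (-(w 0)).toNat ≤ K :=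
    ⟨d.support.sup fun w => (-(w 0)).toNat, fun w hw => Finset.le_sup (f := fun w => (-(w 0)).toNat) hw⟩
  have hnn : ∀ w ∈ d.support, ∀ i : Fin (m+1), 0 ≤ Function.update w 0 (w 0 + K) i := by
    intro w hw i
    by_cases hi : i = 0
    · subst hi
      rw [Function.update_self]
      have := hKle w hw
      omega
    · rw [Function.update_of_ne hi]
      have hival : (1:ℕ) ≤ i.val := by
        rcases Nat.eq_zero_or_pos i.val with h0 | h1
        · exact absurd (Fin.ext h0 : i = 0) hi
        · exact h1
      exact hZ w hw i hival
  have hcast : ∀ w ∈ d.support,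
      (fun i => ((tnn (m := m) K w i : ℤ))) = Function.update w 0 (w 0 + K) := by
    intro w hw
    funext i
    exact Int.toNat_of_nonneg (hnn w hw i)
  have key : (d.sum fun w a => S.ι a * monB S (tnn K w)) = 0 := by
    apply phi_inj H
    rw [map_zero, map_finsuppSum]
    have h2 : (d.sum fun w a => φD S (S.ι a * monB S (tnn K w)))
        = φD S (S.x 0) ^ K * (d.sum fun w a => φD S (S.ι a) * monD S w) := by
      rw [Finsupp.mul_sum]
      apply Finsupp.sum_congr
      intro w hw
      rw [map_mul, ← monD_of_nat, hcast w hw]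
      calc φD S (S.ι (d w)) * monD S (Function.update w 0 (w 0 + K))
          = φD S (S.ι (d w)) * (φD S (S.x 0) ^ K * monD S w) := by rw [Ypow_mul_monD]
        _ = φD S (S.x 0) ^ K * (φD S (S.ι (d w)) * monD S w) := by
            rw [← mul_assoc, ← Ypow_comm_ιD H, mul_assoc]
    rw [h2, h, mul_zero]
  have htninj : ∀ w ∈ d.support, ∀ w' ∈ d.support, tnn (m := m) K w = tnn K w' → w = w' := by
    intro w hw w' hw' hteq
    funext i
    have h1 := hnn w hw i
    have h2 := hnn w' hw' i
    have h3 := congrFun hteq i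
    by_cases hi : i = 0
    · subst hi
      rw [Function.update_self] at h1 h2
      rw [tnn_zero, tnn_zero] at h3
      omega
    · rw [Function.update_of_ne hi] at h1 h2
      rw [tnn_ne K w hi, tnn_ne K w' hi] at h3
      omega
  have hdd : (d.sum fun w a => Finsupp.single (tnn K w) a) = 0 := by
    apply repr_zero (S := S)
    rw [single_sum_sum d (tnn K) (fun _ a => a) (fun v a => S.ι a * monB S v)
      (fun v => by simp) (fun v a b => by show S.ι (a+b) * monB S v = _; rw [map_add, add_mul])]
    exact key
  ext w
  by_cases hw : w ∈ d.support
  · have := single_sum_apply d (tnn K) (fun _ a => a) htninj w hw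
    rw [hdd] at this
    simpa using this.symm
  · simpa using Finsupp.notMem_support_iff.mp hw

lemma freeD_unique (H : Hyp S) {e₁ e₂ : (Fin (m+1) → ℤ) →₀ A}
    (h1 : ∀ w ∈ e₁.support, ∀ i : Fin (m+1), (1:ℕ) ≤ i.val → 0 ≤ w i)
    (h2 : ∀ w ∈ e₂.support, ∀ i : Fin (m+1), (1:ℕ) ≤ i.val → 0 ≤ w i)
    (heq : (e₁.sum fun w a => φD S (S.ι a) * monD S w)
      = e₂.sum fun w a => φD S (S.ι a) * monD S w) : e₁ = e₂ := by
  classical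
  have hsub : ((e₁ - e₂).sum fun w a => φD S (S.ι a) * monD S w) = 0 := by
    rw [Finsupp.sum_sub_index (fun w a b => by rw [map_sub, map_sub, sub_mul]), heq, sub_self]
  have hZ : ∀ w ∈ (e₁ - e₂).support, ∀ i : Fin (m+1), (1:ℕ) ≤ i.val → 0 ≤ w i := by
    intro w hw i hi
    have := Finsupp.support_sub (f := e₁) (g := e₂) hw
    rw [Finset.mem_union] at this
    rcases this with h | h
    · exact h1 w h i hi
    · exact h2 w h i hi
  have := zeroD H hZ hsub
  rwa [sub_eq_zero] at this

end Dside2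

section Assemble

open OreLocalization

variable [inst : OreLocalization.OreSet (Smon S)]

/-- The units `q_{ij}` extended to all pairs. -/
noncomputable def Qu (H : Hyp S) (i j : Fin (m+1)) : Aˣ :=
  if h : i < j then (H.hqu i j h).unit
  else if h' : j < i then ((H.hqu j i h').unit)⁻¹ else 1

lemma Qu_eq (H : Hyp S) {i j : Fin (m+1)} (h : i < j) : ((Qu H i j : Aˣ) : A) = S.q i j := by
  rw [Qu, dif_pos h, IsUnit.unit_spec]

lemma Qu_central (H : Hyp S) (i j : Fin (m+1)) (b : A) :
    ((Qu H i j : Aˣ) : A) * b = b * ((Qu H i j : Aˣ) : A) := by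
  rw [Qu]
  split
  · rw [IsUnit.unit_spec]
    exact H.hqc i j b
  · split
    · rename_i h h'
      have hc : Commute (((H.hqu j i h').unit : Aˣ) : A) b := by
        show _ = _
        rw [IsUnit.unit_spec]
        exact H.hqc j i b
      exact (hc.units_inv_left).eq
    · simp

lemma Qu_diag (H : Hyp S) (i : Fin (m+1)) : Qu H i i = 1 := by
  rw [Qu, dif_neg (lt_irrefl i), dif_neg (lt_irrefl i)]

lemma Qu_inv (H : Hyp S) (i j : Fin (m+1)) (h : i < j) : Qu H j i = (Qu H i j)⁻¹ := by
  rw [Qu, Qu, dif_neg (asymm h), dif_pos h, dif_pos h]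

lemma δ_Qu (H : Hyp S) (t i j : Fin (m+1)) : S.δ t ((Qu H i j : Aˣ) : A) = 0 := by
  rw [Qu]
  split
  · rw [IsUnit.unit_spec]
    exact H.hδq t i j
  · split
    · rename_i h h'
      refine δ_inv t _ ?_
      rw [IsUnit.unit_spec]
      exact H.hδq t j i
    · rw [Units.val_one]
      exact δ_one t

/-- The extension `O_{q,δ}^{1,n}` structure on the localization. -/
noncomputable def Eext (H : Hyp S) : OExt A (OreLocalization (Smon S) B) (m+1) 1 where
  hr := le_refl 1
  hrn := Nat.succ_le_succ (Nat.zero_le m)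
  ι := (φD S).comp S.ι
  hι := (phi_inj H).comp S.hι
  x := fun i => φD S (S.x i)
  xinv := fun _ => yD S
  x_mul_xinv := fun i hi => by
    have h0 : i = 0 := by
      apply Fin.ext
      rw [Fin.val_zero]
      omega
    subst h0
    exact Yy
  xinv_mul_x := fun i hi => by
    have h0 : i = 0 := by
      apply Fin.ext
      rw [Fin.val_zero]
      omega
    subst h0
    exact yY
  δ := S.δ
  δ_add := S.δ_add
  δ_mul := fun i a b => by rw [S.δ_mul, H.hσ, add_comm]
  x_comm := fun i a => by
    show φD S (S.x i) * φD S (S.ι a) = φD S (S.ι a) * φD S (S.x i) + φD S (S.ι (S.δ i a))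
    rw [← map_mul, S.x_comm, H.hσ, map_add, map_mul]
  q := Qu H
  q_central := Qu_central H
  q_diag := Qu_diag H
  q_inv := Qu_inv H
  a0 := S.a0
  ac := S.ac
  a0_central := fun i j b => H.ha0c i j b
  ac_central := fun i j t b => H.hacc i j t b
  rel := fun i j hij => by
    have h2 := congrArg (φD S) (S.rel i j hij)
    simp only [map_add, map_mul, map_sum] at h2
    show φD S (S.x j) * φD S (S.x i)
      = φD S (S.ι ((Qu H i j : Aˣ) : A)) * (φD S (S.x i) * φD S (S.x j))
        + φD S (S.ι (S.a0 i j)) + ∑ t : Fin (m+1), φD S (S.ι (S.ac i j t)) * φD S (S.x t)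
    rw [Qu_eq H hij]
    exact h2
  free := fun f => by
    obtain ⟨e, he1, he2⟩ := freeD_exists H f
    refine ⟨e, ⟨he1, he2⟩, ?_⟩
    rintro c ⟨hc1, hc2⟩
    apply freeD_unique H hc1 he1
    have hc2' : f = c.sum fun w a => φD S (S.ι a) * monD S w := hc2
    rw [← hc2', ← he2]

end Assemble

end Stmt14Aux

/-- the localization `D = B S^{-1}` exists and is an extension of `A`
of type `O_{q,δ}^{1,n}` with the same properties. -/
theorem stmt_14 {A B : Type} [Ring A] [Ring B] {n : ℕ} (hn : 0 < n)
    (S : SkewPBW A B n)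
    (hσ : ∀ (i : Fin n) (a : A), S.σ i a = a)
    (hqc : ∀ (i j : Fin n) (b : A), S.q i j * b = b * S.q i j)
    (hacc : ∀ (i j t : Fin n) (b : A), S.ac i j t * b = b * S.ac i j t)
    (ha0c : ∀ (i j : Fin n) (b : A), S.a0 i j * b = b * S.a0 i j)
    (hqu : ∀ i j : Fin n, i < j → IsUnit (S.q i j))
    (hδ1 : ∀ a : A, S.δ ⟨0, hn⟩ a = 0)
    (hδq : ∀ t i j : Fin n, S.δ t (S.q i j) = 0)
    (hδa0 : ∀ t i j : Fin n, S.δ t (S.a0 i j) = 0)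
    (hδac : ∀ t i j m : Fin n, S.δ t (S.ac i j m) = 0)
    (hp1a0 : ∀ j : Fin n, S.a0 ⟨0, hn⟩ j = 0)
    (hp1ac : ∀ j t : Fin n, S.ac ⟨0, hn⟩ j t = 0) :
    ∃ L : SkewPBWLoc A B n S,
      (∀ a : A, L.E.δ L.E.i1 a = 0) ∧
      (∀ t i j : Fin n, L.E.δ t (L.E.q i j : A) = 0) ∧
      (∀ t i j : Fin n, L.E.δ t (L.E.a0 i j) = 0) ∧
      (∀ t i j m : Fin n, L.E.δ t (L.E.ac i j m) = 0) ∧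
      (∀ j : Fin n, L.E.a0 L.E.i1 j = 0) ∧
      (∀ j t : Fin n, L.E.ac L.E.i1 j t = 0) := by
  obtain ⟨mm, rfl⟩ : ∃ mm, n = mm + 1 := ⟨n - 1, by omega⟩
  have hz : (⟨0, hn⟩ : Fin (mm+1)) = 0 := rfl
  have H : Stmt14Aux.Hyp S :=
    { hσ := hσ, hqc := hqc, hacc := hacc, ha0c := ha0c, hqu := hqu
      hδ1 := fun a => by rw [← hz]; exact hδ1 a
      hδq := hδq, hδa0 := hδa0, hδac := hδac
      hp1a0 := fun j => by rw [← hz]; exact hp1a0 j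
      hp1ac := fun j t => by rw [← hz]; exact hp1ac j t }
  letI inst : OreLocalization.OreSet (Stmt14Aux.Smon S) :=
    Classical.choice (Stmt14Aux.oreSet_nonempty H)
  refine ⟨{ D := OreLocalization (Stmt14Aux.Smon S) B
            instD := inferInstance
            φ := Stmt14Aux.φD S
            hφ := Stmt14Aux.phi_inj H
            E := Stmt14Aux.Eext H
            hEι := rfl
            hEx := fun i => rfl
            hEq := fun i j h => Stmt14Aux.Qu_eq H h
            hEa0 := rfl
            hEac := rfl
            hEδ := rfl }, ?_, ?_, ?_, ?_, ?_, ?_⟩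
  · exact fun a => H.hδ1 a
  · exact fun t i j => Stmt14Aux.δ_Qu H t i j
  · exact fun t i j => hδa0 t i j
  · exact fun t i j k => hδac t i j k
  · exact fun j => H.hp1a0 j
  · exact fun j t => H.hp1ac j t
end
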